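/- Let k ≥ 1 and i > k. If k + f(k) = i and (k+1) + f(k+1) > i + 1, then v_k is the unique Jaconian vertex of J_i(1), i.e. 𝕁(J_i(1)) = {k}. -/

import Mathlib

/-- The Jaco out-degree function `f`: `f 0 = 0` and, for `n ≥ 1`,
`f n = n - #{k : 1 ≤ k < n ∧ k + f k ≥ n}` (the out-degree of `v_n` in `J_∞(1)`). -/
def jacoF : ℕ → ℕ
  | 0 => 0
  | n + 1 =>
    (n + 1) - ((Finset.range (n + 1)).attach.filter
      (fun a => 1 ≤ a.1 ∧ n + 1 ≤ a.1 + jacoF a.1)).card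
  decreasing_by all_goals exact Finset.mem_range.mp a.2

/-- The in-degree `d⁻(j) = #{i : 1 ≤ i < j ∧ j ≤ i + f i}` of `v_j` in `J_∞(1)`. -/
def jacoDin (j : ℕ) : ℕ := ((Finset.Ico 1 j).filter (fun i => j ≤ i + jacoF i)).card

/-- The degree `d_n(j) = d⁻(j) + #{k : j < k ≤ n ∧ k ≤ j + f j}` of `v_j` in the
underlying undirected graph of the finite Jaco graph `J_n(1)`. -/
def jacoDeg (n j : ℕ) : ℕ :=
  jacoDin j + ((Finset.Ioc j n).filter (fun k => k ≤ j + jacoF j)).card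

/-- The maximum degree `Δ(J_n(1)) = max_{1 ≤ j ≤ n} d_n(j)`. -/
def jacoDelta (n : ℕ) : ℕ := (Finset.Icc 1 n).sup (jacoDeg n)

/-- The Jaconian set `𝕁(J_n(1)) = {j : 1 ≤ j ≤ n ∧ d_n(j) = Δ(J_n(1))}`. -/
def jacoJ (n : ℕ) : Finset ℕ := (Finset.Icc 1 n).filter (fun j => jacoDeg n j = jacoDelta n)

lemma jacoF_succ (n : ℕ) : jacoF (n + 1) = (n + 1) - jacoDin (n + 1) := by
  rw [jacoF, jacoDin]
  congr 1
  rw [Finset.filter_attach (fun a => 1 ≤ a ∧ n + 1 ≤ a + jacoF a), Finset.card_map,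
    Finset.card_attach]
  congr 1
  ext x
  simp [Finset.mem_Ico, Finset.mem_range]
  omega

lemma jacoDin_le (n : ℕ) : jacoDin n + 1 ≤ n ∨ n = 0 := by
  rcases n with _ | m
  · right; rfl
  · left
    have := Finset.card_filter_le (Finset.Ico 1 (m+1)) (fun i => m + 1 ≤ i + jacoF i)
    simp only [Nat.card_Ico] at this
    unfold jacoDin
    omega

lemma jacoDin_add_F (n : ℕ) (hn : 1 ≤ n) : jacoDin n + jacoF n = n := by
  rcases n with _ | m
  · omega
  · rw [jacoF_succ]
    rcases jacoDin_le (m+1) with h | h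
    · omega
    · omega

lemma jacoDin_succ_le (n : ℕ) : jacoDin (n + 1) ≤ jacoDin n + 1 := by
  unfold jacoDin
  calc ((Finset.Ico 1 (n+1)).filter (fun i => n + 1 ≤ i + jacoF i)).card
      ≤ (((Finset.Ico 1 n).filter (fun i => n ≤ i + jacoF i)) ∪ {n}).card := by
        apply Finset.card_le_card
        intro x hx
        simp only [Finset.mem_filter, Finset.mem_Ico, Finset.mem_union,
          Finset.mem_singleton] at *
        omega
    _ ≤ _ := by
        apply le_trans (Finset.card_union_le _ _)
        simp

lemma jacoF_mono : Monotone jacoF := by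
  apply monotone_nat_of_le_succ
  intro n
  rcases n with _ | m
  · simp [jacoF]
  · have h1 := jacoF_succ m
    have h2 := jacoF_succ (m+1)
    have h3 := jacoDin_succ_le (m+1)
    have h4 := jacoDin_le (m+1)
    have h5 := jacoDin_le (m+2)
    omega


lemma jacoDeg_eq (n j : ℕ) : jacoDeg n j = jacoDin j + (min n (j + jacoF j) - j) := by
  unfold jacoDeg
  congr 1
  have : (Finset.Ioc j n).filter (fun k => k ≤ j + jacoF j)
      = Finset.Ioc j (min n (j + jacoF j)) := by
    ext x
    simp only [Finset.mem_filter, Finset.mem_Ioc, lt_min_iff, le_min_iff]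
    omega
  rw [this, Nat.card_Ioc]

/-- If `k + f k = i` and `(k+1) + f (k+1) > i + 1`, then `v_k` is the unique
Jaconian vertex of `J_i(1)`. -/
theorem stmt_8 (k i : ℕ) (hk : 1 ≤ k) (hki : k < i)
    (h1 : k + jacoF k = i) (h2 : (k + 1) + jacoF (k + 1) > i + 1) :
    jacoJ i = {k} := by
  have key : ∀ j ∈ Finset.Icc 1 i, jacoDeg i j ≤ k ∧ (jacoDeg i j = k → j = k) := by
    intro j hj
    simp only [Finset.mem_Icc] at hj
    rw [jacoDeg_eq]
    have hdf := jacoDin_add_F j hj.1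
    by_cases hjk : j ≤ k
    · have hf : jacoF j ≤ jacoF k := jacoF_mono hjk
      have hmin : min i (j + jacoF j) = j + jacoF j := by omega
      rw [hmin]
      omega
    · have hf : jacoF (k + 1) ≤ jacoF j := jacoF_mono (by omega)
      have hmin : min i (j + jacoF j) = i := by omega
      rw [hmin]
      omega
  have hdegk : jacoDeg i k = k := by
    rw [jacoDeg_eq]
    have hdf := jacoDin_add_F k hk
    have hmin : min i (k + jacoF k) = i := by omega
    rw [hmin]; omega
  have hkmem : k ∈ Finset.Icc 1 i := by simp; omega
  have hdelta : jacoDelta i = k := by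
    apply le_antisymm
    · apply Finset.sup_le
      intro j hj
      exact (key j hj).1
    · have := Finset.le_sup (f := jacoDeg i) hkmem
      rw [hdegk] at this
      exact this
  ext x
  simp only [jacoJ, Finset.mem_filter, Finset.mem_singleton, hdelta]
  constructor
  · rintro ⟨hx, hdx⟩
    exact (key x hx).2 hdx
  · rintro rfl
    exact ⟨hkmem, hdegk⟩
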